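/- For r = s, the twice-iterated contiguous relation holds: (q^{-2n}(1-q^{α})(1-q^{α+1})/((q^{-n}-q^{α})(q^{-n}-q^{α+1}))) · _rφ_s(q^{-n}, q^{α+2}, α_3,...; β_1,...; q, z) = _rφ_s(q^{-n}, q^{α}, ...; q, z) + (q^{α}(1+q)(1-q^{-n})/(q^{-n}-q^{α+1})) · _rφ_s(q^{-n+1}, q^{α}, ...; q, z) + (q^{2α}(1-q^{-n})(1-q^{-n+1})/((q^{-n}-q^{α})(q^{-n}-q^{α+1}))) · _rφ_s(q^{-n+2}, q^{α}, ...; q, z). -/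
import Mathlib


open MeasureTheory Finset

/-- Finite q-Pochhammer symbol `(a;q)_k = ∏_{j<k} (1 - a q^j)`. -/
noncomputable def qPoch (q a : ℝ) (k : ℕ) : ℝ := ∏ j ∈ Finset.range k, (1 - a * q ^ j)

/-- Infinite q-Pochhammer symbol `(a;q)_∞ = ∏_{j≥0} (1 - a q^j)`. -/
noncomputable def qPochInf (q a : ℝ) : ℝ := ∏' k : ℕ, (1 - a * q ^ k)

/-- General basic hypergeometric series `ᵣφₛ` with numerator parameters `as`,
denominator parameters `bs`. -/
noncomputable def bhs (q : ℝ) (as bs : List ℝ) (z : ℝ) : ℝ :=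
  ∑' k : ℕ,
    (as.map (fun a => qPoch q a k)).prod /
        (qPoch q q k * (bs.map (fun b => qPoch q b k)).prod) *
      ((-1 : ℝ) ^ k * q ^ (k * (k - 1) / 2)) ^ ((1 + (bs.length : ℤ)) - (as.length : ℤ)) *
      z ^ k

/-- q-Laguerre polynomial `L_n^{(δ)}(z;q)` (terminating `₁φ₁` series). -/
noncomputable def qLaguerre (q δ : ℝ) (n : ℕ) (z : ℝ) : ℝ :=
  (qPoch q (q ^ (δ + 1)) n / qPoch q q n) *
    ∑ k ∈ Finset.range (n + 1),
      qPoch q (q ^ (-(n : ℝ))) k / (qPoch q q k * qPoch q (q ^ (δ + 1)) k) *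
        ((-1 : ℝ) ^ k * q ^ (k * (k - 1) / 2)) * (-(q ^ ((n : ℝ) + δ + 1)) * z) ^ k

/-- Little q-Jacobi polynomial `p_n(z;a,b|q)` (terminating `₂φ₁` series). -/
noncomputable def lqJacobi (q a b : ℝ) (n : ℕ) (z : ℝ) : ℝ :=
  ∑ k ∈ Finset.range (n + 1),
    qPoch q (q ^ (-(n : ℝ))) k * qPoch q (a * b * q ^ (n + 1)) k /
      (qPoch q q k * qPoch q (a * q) k) * (q * z) ^ k

/-- q-Meixner polynomial `M_n(x;b,c;q)` evaluated at `x = q^{-z}`. -/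
noncomputable def qMeixner (q b c : ℝ) (n : ℕ) (x : ℝ) : ℝ :=
  ∑ k ∈ Finset.range (n + 1),
    qPoch q (q ^ (-(n : ℝ))) k * qPoch q x k / (qPoch q q k * qPoch q (b * q) k) *
      (-(q ^ (n + 1)) / c) ^ k

/-- Al-Salam-Carlitz I polynomial `U_n^a(z;q)`. -/
noncomputable def alSalamCarlitzI (q a : ℝ) (n : ℕ) (z : ℝ) : ℝ :=
  (-a) ^ n * q ^ (n * (n - 1) / 2) *
    ∑ k ∈ Finset.range (n + 1),
      qPoch q (q ^ (-(n : ℝ))) k * qPoch q z⁻¹ k / (qPoch q q k * qPoch q 0 k) *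
        (q * z / a) ^ k

/-- The `₂φ₂` polynomial `φ_n^{(k)}(z) = ₂φ₂(q^{-n}, q^{γ+k}; q^{δ+1}, q^{γ}; q, -q^{n+δ+1} z)`. -/
noncomputable def phi2 (q δ γ : ℝ) (n k : ℕ) (z : ℝ) : ℝ :=
  ∑ j ∈ Finset.range (n + 1),
    qPoch q (q ^ (-(n : ℝ))) j * qPoch q (q ^ (γ + (k : ℝ))) j /
      (qPoch q q j * qPoch q (q ^ (δ + 1)) j * qPoch q (q ^ γ) j) *
      ((-1 : ℝ) ^ j * q ^ (j * (j - 1) / 2)) * (-(q ^ ((n : ℝ) + δ + 1)) * z) ^ j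

/-- The `₃φ₂` polynomial `Φ_n^{(k)}(z) = ₃φ₂(q^{-n}, q^{γ+k}, abq^{n+1}; aq, q^{γ}; q, qz)`. -/
noncomputable def Phi3 (q a b γ : ℝ) (n k : ℕ) (z : ℝ) : ℝ :=
  ∑ j ∈ Finset.range (n + 1),
    qPoch q (q ^ (-(n : ℝ))) j * qPoch q (q ^ (γ + (k : ℝ))) j *
        qPoch q (a * b * q ^ (n + 1)) j /
      (qPoch q q j * qPoch q (a * q) j * qPoch q (q ^ γ) j) * (q * z) ^ j

/-- The `₃φ₂` polynomial `φ_n^{(k)}` built on q-Meixner data, at `x = q^{-z}`: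
`₃φ₂(q^{-n}, q^{γ+k}, q^{-z}; bq, q^{γ}; q, -q^{n+1}/c)`. -/
noncomputable def phi3M (q b c γ : ℝ) (n k : ℕ) (x : ℝ) : ℝ :=
  ∑ j ∈ Finset.range (n + 1),
    qPoch q (q ^ (-(n : ℝ))) j * qPoch q (q ^ (γ + (k : ℝ))) j * qPoch q x j /
      (qPoch q q j * qPoch q (b * q) j * qPoch q (q ^ γ) j) * (-(q ^ (n + 1)) / c) ^ j

/-- The `₃φ₂` polynomial `ϕ_n^{(k)}(z) = ₃φ₂(q^{-n}, q^{γ+k}, z^{-1}; 0, q^{γ}; q, qz/a)`. -/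
noncomputable def phi3AS (q a γ : ℝ) (n k : ℕ) (z : ℝ) : ℝ :=
  ∑ j ∈ Finset.range (n + 1),
    qPoch q (q ^ (-(n : ℝ))) j * qPoch q (q ^ (γ + (k : ℝ))) j * qPoch q z⁻¹ j /
      (qPoch q q j * qPoch q 0 j * qPoch q (q ^ γ) j) * (q * z / a) ^ j

lemma qPoch_succ' (q a : ℝ) (k : ℕ) : qPoch q a (k+1) = qPoch q a k * (1 - a * q ^ k) := by
  simp [qPoch, Finset.prod_range_succ]

lemma qPoch_eq_zero (q a : ℝ) (m : ℕ) (h : a * q ^ m = 1) {k : ℕ} (hk : m < k) :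
    qPoch q a k = 0 := by
  apply Finset.prod_eq_zero (Finset.mem_range.mpr hk)
  rw [h]; ring

lemma qPoch_shift (q : ℝ) (hq : 0 < q) (β : ℝ) (k : ℕ) :
    (1 - q ^ β) * qPoch q (q ^ (β + 1)) k = (1 - q ^ β * q ^ k) * qPoch q (q ^ β) k := by
  induction k with
  | zero => simp [qPoch]
  | succ k ih =>
    have e1 : q ^ (β + 1) * q ^ k = q ^ β * q ^ (k+1) := by
      rw [Real.rpow_add hq, Real.rpow_one]; ring
    rw [qPoch_succ', qPoch_succ']
    linear_combination (1 - q ^ (β+1) * q ^ k) * ih - (1 - q ^ β * q ^ k) * qPoch q (q^β) k * e1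

lemma key_poly (q av Nv X Q2 P1 P2 P0 Pa : ℝ)
    (Sa : (1-av)*(1-av*q)*Q2 = (1-av*X)*(1-av*q*X)*Pa)
    (S1 : (1-Nv)*P1 = (1-Nv*X)*P0)
    (S2 : (1-Nv*q)*P2 = (1-Nv*q*X)*P1) :
    Nv^2*(1-av)*(1-av*q)*(Q2*P0) = (Nv-av)*(Nv-av*q)*(P0*Pa)
      + av*(1+q)*(1-Nv)*(Nv-av)*(P1*Pa) + av^2*(1-Nv)*(1-Nv*q)*(P2*Pa) := by
  linear_combination (Nv^2*P0)*Sa - (av*(1+q)*(Nv-av)*Pa + av^2*(1-Nv*q*X)*Pa)*S1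
    - (av^2*(1-Nv)*Pa)*S2

lemma bhs_conv (q : ℝ) (n : ℕ) (as3 bs : List ℝ) (z : ℝ) (a b : ℝ) (m : ℕ)
    (hm : a * q ^ m = 1) (hmn : m ≤ n) :
    bhs q (a :: b :: as3) bs z = ∑ k ∈ Finset.range (n+1),
      qPoch q a k * (qPoch q b k * (as3.map (fun x => qPoch q x k)).prod) /
          (qPoch q q k * (bs.map (fun x => qPoch q x k)).prod) *
        ((-1 : ℝ) ^ k * q ^ (k * (k - 1) / 2)) ^ ((1 + (bs.length : ℤ)) - ((as3.length : ℤ)+1+1)) *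
        z ^ k := by
  rw [bhs]
  rw [tsum_eq_sum (s := Finset.range (n+1)) ?_]
  · refine Finset.sum_congr rfl fun k hk => ?_
    simp only [List.map_cons, List.prod_cons, List.length_cons]
    push_cast
    ring_nf
  · intro k hk
    have : m < k := by simp [Finset.mem_range] at hk; omega
    simp [List.map_cons, List.prod_cons, qPoch_eq_zero q a m hm this]


/-- twice-iterated contiguous relation for `ᵣφₛ` with `r = s`. -/
theorem stmt17 (q α : ℝ) (hq0 : 0 < q) (hq1 : q < 1) (n : ℕ) (hn : 2 ≤ n)
    (h1 : q ^ (-(n : ℝ)) ≠ q ^ α) (h2 : q ^ (-(n : ℝ)) ≠ q ^ (α + 1))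
    (h3 : q ^ α ≠ 1) (h4 : q ^ (α + 1) ≠ 1) (as3 bs : List ℝ)
    (hlen : bs.length = as3.length + 2) (z : ℝ) :
    q ^ (-2 * (n : ℝ)) * (1 - q ^ α) * (1 - q ^ (α + 1)) /
        ((q ^ (-(n : ℝ)) - q ^ α) * (q ^ (-(n : ℝ)) - q ^ (α + 1))) *
        bhs q (q ^ (-(n : ℝ)) :: q ^ (α + 2) :: as3) bs z =
      bhs q (q ^ (-(n : ℝ)) :: q ^ α :: as3) bs z +
        q ^ α * (1 + q) * (1 - q ^ (-(n : ℝ))) / (q ^ (-(n : ℝ)) - q ^ (α + 1)) *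
          bhs q (q ^ (-(n : ℝ) + 1) :: q ^ α :: as3) bs z +
        q ^ (2 * α) * (1 - q ^ (-(n : ℝ))) * (1 - q ^ (-(n : ℝ) + 1)) /
            ((q ^ (-(n : ℝ)) - q ^ α) * (q ^ (-(n : ℝ)) - q ^ (α + 1))) *
          bhs q (q ^ (-(n : ℝ) + 2) :: q ^ α :: as3) bs z := by
  have eα1 : q ^ (α + 1) = q ^ α * q := by rw [Real.rpow_add hq0, Real.rpow_one]
  have eN1 : q ^ (-(n:ℝ) + 1) = q ^ (-(n:ℝ)) * q := by rw [Real.rpow_add hq0, Real.rpow_one]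
  have eN2 : q ^ (-(n:ℝ) + 2) = q ^ (-(n:ℝ)) * q * q := by
    rw [show -(n:ℝ)+2 = (-(n:ℝ)+1)+1 by ring, Real.rpow_add hq0, Real.rpow_one, eN1]
  have e2n : q ^ (-2 * (n:ℝ)) = q ^ (-(n:ℝ)) * q ^ (-(n:ℝ)) := by
    rw [show -2*(n:ℝ) = -(n:ℝ) + -(n:ℝ) by ring, Real.rpow_add hq0]
  have e2α : q ^ (2 * α) = q ^ α * q ^ α := by
    rw [show 2*α = α + α by ring, Real.rpow_add hq0]
  have hd1 : q ^ (-(n:ℝ)) - q ^ α ≠ 0 := sub_ne_zero.mpr h1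
  have hd2 : q ^ (-(n:ℝ)) - q ^ α * q ≠ 0 := by rw [← eα1]; exact sub_ne_zero.mpr h2
  have hm0 : q ^ (-(n:ℝ)) * q ^ n = 1 := by
    rw [← Real.rpow_natCast q n, ← Real.rpow_add hq0]; simp
  have hm1 : (q ^ (-(n:ℝ)) * q) * q ^ (n-1) = 1 := by
    have : q * q ^ (n-1) = q ^ n := by
      rw [← pow_succ']; congr 1; omega
    rw [mul_assoc, this, hm0]
  have hm2 : (q ^ (-(n:ℝ)) * q * q) * q ^ (n-2) = 1 := by
    have h : q * q * q ^ (n-2) = q ^ (n-2+1+1) := by ring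
    have h2 : n - 2 + 1 + 1 = n := by omega
    rw [mul_assoc, mul_assoc, ← mul_assoc q q, h, h2, hm0]
  rw [e2n, e2α, eα1, eN2, eN1]
  rw [bhs_conv q n as3 bs z _ _ n hm0 le_rfl, bhs_conv q n as3 bs z _ _ n hm0 le_rfl,
    bhs_conv q n as3 bs z _ _ (n-1) hm1 (by omega), bhs_conv q n as3 bs z _ _ (n-2) hm2 (by omega)]
  rw [Finset.mul_sum, Finset.mul_sum, Finset.mul_sum, ← Finset.sum_add_distrib,
    ← Finset.sum_add_distrib]
  refine Finset.sum_congr rfl fun k hk => ?_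
  -- contiguous qPoch relations
  have Sa : (1 - q^α) * (1 - q^α*q) * qPoch q (q ^ (α+2)) k
      = (1 - q^α*q^k) * (1 - q^α*q*q^k) * qPoch q (q^α) k := by
    have t1 := qPoch_shift q hq0 (α+1) k
    have t2 := qPoch_shift q hq0 α k
    rw [show α+1+1 = α+2 by ring] at t1
    rw [eα1] at t1 t2
    linear_combination (1 - q^α) * t1 + (1 - q^α*q*q^k) * t2
  have S1 : (1 - q ^ (-(n:ℝ))) * qPoch q (q ^ (-(n:ℝ)) * q) k
      = (1 - q ^ (-(n:ℝ)) * q^k) * qPoch q (q ^ (-(n:ℝ))) k := by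
    have t := qPoch_shift q hq0 (-(n:ℝ)) k
    rw [eN1] at t; exact t
  have S2 : (1 - q ^ (-(n:ℝ)) * q) * qPoch q (q ^ (-(n:ℝ)) * q * q) k
      = (1 - q ^ (-(n:ℝ)) * q * q^k) * qPoch q (q ^ (-(n:ℝ)) * q) k := by
    have t := qPoch_shift q hq0 (-(n:ℝ)+1) k
    rw [show -(n:ℝ)+1+1 = -(n:ℝ)+2 by ring, eN2, eN1] at t; exact t
  have key := key_poly q (q^α) (q ^ (-(n:ℝ))) (q^k) _ _ _ _ _ Sa S1 S2
  have key2 : q ^ (-(n:ℝ)) * q ^ (-(n:ℝ)) * (1 - q^α) * (1 - q^α*q) /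
        ((q ^ (-(n:ℝ)) - q^α) * (q ^ (-(n:ℝ)) - q^α*q)) *
        (qPoch q (q ^ (α+2)) k * qPoch q (q ^ (-(n:ℝ))) k)
      = qPoch q (q ^ (-(n:ℝ))) k * qPoch q (q^α) k
        + q^α * (1+q) * (1 - q ^ (-(n:ℝ))) / (q ^ (-(n:ℝ)) - q^α*q) *
            (qPoch q (q ^ (-(n:ℝ)) * q) k * qPoch q (q^α) k)
        + q^α * q^α * (1 - q ^ (-(n:ℝ))) * (1 - q ^ (-(n:ℝ)) * q) /
            ((q ^ (-(n:ℝ)) - q^α) * (q ^ (-(n:ℝ)) - q^α*q)) *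
            (qPoch q (q ^ (-(n:ℝ)) * q * q) k * qPoch q (q^α) k) := by
    have hi2 : (q ^ (-(n:ℝ)) - q^α*q) * (q ^ (-(n:ℝ)) - q^α*q)⁻¹ = 1 := mul_inv_cancel₀ hd2
    have hi12 : ((q ^ (-(n:ℝ)) - q^α) * (q ^ (-(n:ℝ)) - q^α*q)) *
        ((q ^ (-(n:ℝ)) - q^α) * (q ^ (-(n:ℝ)) - q^α*q))⁻¹ = 1 :=
      mul_inv_cancel₀ (mul_ne_zero hd1 hd2)
    linear_combination (((q ^ (-(n:ℝ)) - q^α) * (q ^ (-(n:ℝ)) - q^α*q))⁻¹)*key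
      + (qPoch q (q ^ (-(n:ℝ))) k * qPoch q (q^α) k
          + q^α*(1+q)*(1 - q ^ (-(n:ℝ)))*(qPoch q (q ^ (-(n:ℝ)) * q) k * qPoch q (q^α) k)
            * (q ^ (-(n:ℝ)) - q^α*q)⁻¹)*hi12
      - (q^α*(1+q)*(1 - q ^ (-(n:ℝ)))*(qPoch q (q ^ (-(n:ℝ)) * q) k * qPoch q (q^α) k)
          * (q ^ (-(n:ℝ)) - q^α)
          * ((q ^ (-(n:ℝ)) - q^α) * (q ^ (-(n:ℝ)) - q^α*q))⁻¹)*hi2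
  linear_combination ((as3.map (fun x => qPoch q x k)).prod *
    ((-1:ℝ)^k * q ^ (k*(k-1)/2)) ^ ((1 + (bs.length:ℤ)) - ((as3.length:ℤ)+1+1)) * z^k /
    (qPoch q q k * (bs.map (fun x => qPoch q x k)).prod)) * key2
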